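/- A finite simple graph G is perfect if and only if for every r ≥ 1 and every vertex subset V that is minimal among subsets with chromatic number of the induced subgraph exceeding r, the induced subgraph G_V is a complete graph on r+1 vertices. -/

import Mathlib

open SimpleGraph

/-- A graph is perfect if for every induced subgraph the chromatic number equals
the clique number. -/
def IsPerfect {α : Type*} (G : SimpleGraph α) : Prop :=
  ∀ V : Set α, (G.induce V).chromaticNumber = ((G.induce V).cliqueNum : ℕ∞)

lemma aux_clique_univ {α : Type*} (G : SimpleGraph α) {W : Set α} (hc : G.IsClique W)
    [Fintype ↥W] : (G.induce W).IsClique (Finset.univ : Finset ↥W) := by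
  intro a _ b _ hab
  simp only [comap_adj, Function.Embedding.coe_subtype]
  exact hc a.2 b.2 (fun h => hab (Subtype.ext h))

lemma aux_not_colorable {α : Type*} (G : SimpleGraph α) {W : Set α} (hc : G.IsClique W)
    [Fintype ↥W] {r : ℕ} (hr : r < Fintype.card ↥W) : ¬ (G.induce W).Colorable r := by
  intro h
  have := (aux_clique_univ G hc).card_le_of_colorable h
  simp at this
  rw [← Nat.card_coe_set_eq, Nat.card_eq_fintype_card] at this
  omega

lemma aux_clique_of_iso {α : Type*} (G : SimpleGraph α) {W : Set α} {m : ℕ}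
    (e : G.induce W ≃g completeGraph (Fin m)) :
    G.IsClique W ∧ ∀ [Fintype ↥W], Fintype.card ↥W = m := by
  constructor
  · intro a ha b hb hab
    have hne : (⟨a, ha⟩ : ↥W) ≠ ⟨b, hb⟩ := fun h => hab (congrArg Subtype.val h)
    have : (completeGraph (Fin m)).Adj (e ⟨a, ha⟩) (e ⟨b, hb⟩) := by
      simp only [completeGraph_eq_top, top_adj, ne_eq]
      exact fun h => hne (e.toEquiv.injective h)
    have := e.map_rel_iff.mp this
    simpa using this
  · intro _
    rw [Fintype.card_congr e.toEquiv, Fintype.card_fin]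

lemma aux_iso_of_clique {α : Type*} (G : SimpleGraph α) {W : Set α} [Fintype ↥W]
    (hc : G.IsClique W) {m : ℕ} (hcard : Fintype.card ↥W = m) :
    Nonempty (G.induce W ≃g completeGraph (Fin m)) := by
  refine ⟨⟨Fintype.equivFinOfCardEq hcard, ?_⟩⟩
  intro a b
  simp only [completeGraph_eq_top, top_adj, ne_eq, EmbeddingLike.apply_eq_iff_eq]
  constructor
  · intro hab
    simp only [comap_adj, Function.Embedding.coe_subtype]
    exact hc a.2 b.2 (fun h => hab (Subtype.ext h))
  · intro h
    exact fun hab => (G.induce W).loopless.irrefl b (hab ▸ h)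

lemma aux_card_le_cliqueNum {n : ℕ} (G : SimpleGraph (Fin n)) {W V : Set (Fin n)}
    (hWV : W ⊆ V) (hc : G.IsClique W) [Fintype ↥W] [Fintype ↥V] :
    Fintype.card ↥W ≤ (G.induce V).cliqueNum := by
  classical
  set t : Finset ↥V :=
    (Finset.univ : Finset ↥W).map ⟨Set.inclusion hWV, Set.inclusion_injective hWV⟩ with ht
  have htc : (G.induce V).IsClique t := by
    intro a ha b hb hab
    simp only [ht, Finset.coe_map, Set.mem_image, Finset.coe_univ] at ha hb
    obtain ⟨a', -, rfl⟩ := ha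
    obtain ⟨b', -, rfl⟩ := hb
    simp only [comap_adj, Function.Embedding.coe_subtype]
    exact hc a'.2 b'.2 (fun h => hab (congrArg (Set.inclusion hWV)
      (Subtype.ext h)))
  have := htc.card_le_cliqueNum
  simpa [ht] using this

/-- `G` is perfect iff for every `r ≥ 1`, every vertex set `V` minimal among
those with `χ(G_V) > r` induces a complete graph on `r+1` vertices. -/
theorem stmt_9 (n : ℕ) (G : SimpleGraph (Fin n)) :
    IsPerfect G ↔
      ∀ r : ℕ, 1 ≤ r → ∀ V : Set (Fin n),
        ¬ (G.induce V).Colorable r →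
        (∀ U : Set (Fin n), U ⊂ V → (G.induce U).Colorable r) →
        Nonempty (G.induce V ≃g completeGraph (Fin (r + 1))) := by
  classical
  constructor
  · -- forward direction
    intro hP r hr V hV hmin
    have hVfin : Fintype ↥V := Fintype.ofFinite _
    -- χ(G_V) > r
    have hchi : (r : ℕ∞) < (G.induce V).chromaticNumber := by
      by_contra h
      exact hV (chromaticNumber_le_iff_colorable.mp (not_lt.mp h))
    rw [hP V, Nat.cast_lt] at hchi
    -- get a clique of size r+1
    obtain ⟨s, hs⟩ := (G.induce V).exists_isNClique_cliqueNum
    have hsc : r + 1 ≤ s.card := by rw [hs.card_eq]; omega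
    obtain ⟨t, hts, htcard⟩ := Finset.exists_subset_card_eq hsc
    have htclique : (G.induce V).IsClique t := hs.isClique.subset hts
    -- U := image of t in Fin n
    set U : Set (Fin n) := Subtype.val '' (↑t : Set ↥V) with hU
    have hUV : U ⊆ V := by
      rintro x ⟨y, -, rfl⟩; exact y.2
    have hUclique : G.IsClique U := by
      rintro a ⟨a', ha', rfl⟩ b ⟨b', hb', rfl⟩ hab
      have h := htclique ha' hb' (fun h => hab (congrArg Subtype.val h))
      simpa using h
    have hUfin : Fintype ↥U := Fintype.ofFinite _
    have h1 : U.ncard = r + 1 := by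
      rw [hU, Set.ncard_image_of_injective _ Subtype.val_injective,
        Set.ncard_coe_finset, htcard]
    have hUcard : Fintype.card ↥U = r + 1 := by
      rw [← Nat.card_eq_fintype_card, Nat.card_coe_set_eq, h1]
    have hUnot : ¬ (G.induce U).Colorable r :=
      aux_not_colorable G hUclique (by omega)
    have hUeq : U = V := by
      by_contra h
      exact hUnot (hmin U (ssubset_of_ne_of_subset h hUV))
    exact hUeq ▸ aux_iso_of_clique G hUclique hUcard
  · -- backward direction
    intro h V
    have hVfin : Fintype ↥V := Fintype.ofFinite _
    -- ω ≤ χ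
    obtain ⟨s, hs⟩ := (G.induce V).exists_isNClique_cliqueNum
    have hle : ((G.induce V).cliqueNum : ℕ∞) ≤ (G.induce V).chromaticNumber := by
      have := hs.isClique.card_le_chromaticNumber
      rwa [hs.card_eq] at this
    refine le_antisymm ?_ hle
    rw [chromaticNumber_le_iff_colorable]
    by_contra hcol
    set r := (G.induce V).cliqueNum with hrdef
    -- r ≥ 1
    have hVne : Nonempty ↥V := by
      by_contra hne
      have : IsEmpty ↥V := not_nonempty_iff.mp hne
      exact hcol ⟨⟨fun v => (this.false v).elim, fun {a} => (this.false a).elim⟩⟩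
    have hr1 : 1 ≤ r := by
      obtain ⟨v⟩ := hVne
      have : (G.induce V).IsClique ({v} : Finset ↥V) := by simp
      have := this.card_le_cliqueNum
      simpa using this
    -- find minimal bad subset
    set S : Set (Set (Fin n)) := {W | W ⊆ V ∧ ¬ (G.induce W).Colorable r} with hS
    have hSne : V ∈ S := ⟨subset_rfl, hcol⟩
    obtain ⟨W, hWS, hWmin⟩ := (Finite.to_wellFoundedLT (α := Set (Fin n))).wf.has_min S
      ⟨V, hSne⟩
    have hWV : W ⊆ V := hWS.1
    have hWmin' : ∀ U : Set (Fin n), U ⊂ V → True := fun _ _ => trivial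
    obtain ⟨e⟩ := h r hr1 W hWS.2 (fun U hUW => by
      by_contra hUc
      exact hWmin U ⟨hUW.subset.trans hWV, hUc⟩ hUW)
    obtain ⟨hWclique, hWcard⟩ := aux_clique_of_iso G e
    have hWfin : Fintype ↥W := Fintype.ofFinite _
    have := aux_card_le_cliqueNum G hWV hWclique
    rw [hWcard] at this
    omega
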